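/- Fix λ ≥ 0. Let T = node t_x t_y X Y be a branch-length binary tree with all branch lengths nonnegative that is ultrametric with depth d (i.e., Depth T d holds), and suppose the child subtree X is itself an internal node (X = node t_u t_v U V). Then D(T) ≥ exp(−2λd) · (1 + (1/4)(1 − exp(−4λ(d − t_x)))). -/
import Mathlib
set_option maxHeartbeats 2000000


/-- A branch-length binary tree: internal nodes carry the lengths of the
two branches to the subtrees. -/
inductive BLTree : Type
  | leaf : BLTree
  | node : ℝ → ℝ → BLTree → BLTree → BLTree

/-- The pair (α(T), β(T)) of Fitch probabilities, with conservation
probability p(t) = (1 + exp(-2λt))/2 on a branch of length t. -/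
noncomputable def fitchAB (lam : ℝ) : BLTree → ℝ × ℝ
  | .leaf => (1, 0)
  | .node tX tY X Y =>
      let aX := (fitchAB lam X).1; let bX := (fitchAB lam X).2
      let aY := (fitchAB lam Y).1; let bY := (fitchAB lam Y).2
      let pX := (1 + Real.exp (-2 * lam * tX)) / 2
      let pY := (1 + Real.exp (-2 * lam * tY)) / 2
      let qX := 1 - pX; let qY := 1 - pY
      ((pX * aX + qX * bX) * (pY * aY + qY * bY)
        + (pX * aX + qX * bX) * (1 - aY - bY)
        + (1 - aX - bX) * (pY * aY + qY * bY),
       (qX * aX + pX * bX) * (qY * aY + pY * bY)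
        + (qX * aX + pX * bX) * (1 - aY - bY)
        + (1 - aX - bX) * (qY * aY + pY * bY))

/-- D(T) = α(T) - β(T). -/
noncomputable def fitchD (lam : ℝ) (T : BLTree) : ℝ := (fitchAB lam T).1 - (fitchAB lam T).2

/-- All branch lengths are nonnegative. -/
def nonnegLengths : BLTree → Prop
  | .leaf => True
  | .node tX tY X Y => 0 ≤ tX ∧ 0 ≤ tY ∧ nonnegLengths X ∧ nonnegLengths Y

/-- `Depth T d`: the tree is ultrametric with every root-to-leaf path of total length d. -/
def Depth : BLTree → ℝ → Prop
  | .leaf, d => d = 0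
  | .node tX tY X Y, d => Depth X (d - tX) ∧ Depth Y (d - tY)




/-- min of a bilinear function on a box is at a corner. -/
lemma bilin_nonneg (sX sY x y c0 c1 c2 c3 : ℝ) (hx0 : 0 ≤ x) (hxs : x ≤ sX) (hy0 : 0 ≤ y)
    (hys : y ≤ sY) (hsX : 0 < sX) (hsY : 0 < sY)
    (h00 : 0 ≤ c0) (h10 : 0 ≤ c0 + c1*sX) (h01 : 0 ≤ c0 + c2*sY)
    (h11 : 0 ≤ c0 + c1*sX + c2*sY + c3*(sX*sY)) :
    0 ≤ c0 + c1*x + c2*y + c3*(x*y) := by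
  have key : 0 ≤ c0*((sX-x)*(sY-y)) + (c0+c1*sX)*(x*(sY-y))
      + (c0+c2*sY)*((sX-x)*y) + (c0+c1*sX+c2*sY+c3*(sX*sY))*(x*y) := by
    have w1 : 0 ≤ (sX-x)*(sY-y) := mul_nonneg (by linarith) (by linarith)
    have w2 : 0 ≤ x*(sY-y) := mul_nonneg hx0 (by linarith)
    have w3 : 0 ≤ (sX-x)*y := mul_nonneg (by linarith) hy0
    have w4 : 0 ≤ x*y := mul_nonneg hx0 hy0
    nlinarith [mul_nonneg h00 w1, mul_nonneg h10 w2, mul_nonneg h01 w3, mul_nonneg h11 w4]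
  nlinarith [key, mul_pos hsX hsY]

lemma core (eh eX eY x y a b : ℝ)
    (heh0 : 0 < eh) (hehX : eh ≤ eX) (hehY : eh ≤ eY)
    (heX1 : eX ≤ 1) (heY1 : eY ≤ 1)
    (hx0 : 0 ≤ x) (hx1 : x ≤ 1) (hy0 : 0 ≤ y) (hy1 : y ≤ 1)
    (ha1 : eh ≤ a) (ha2 : a ≤ 1 - x) (hb1 : eh ≤ b) (hb2 : b ≤ 1 - y)
    (hHa : (3*eh - eh*eX^2)/2 - eh*x ≤ a)
    (hHb : (3*eh - eh*eY^2)/2 - eh*y ≤ b) :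
    3*eh - eh^3 ≤ a*(1+y) + b*(1+x) + eh*((1-x)*(1-y) + 2*(x*y)) - eh*(a*b) := by
  have heh1 : eh ≤ 1 := le_trans hehX heX1
  have ha0 : 0 < a := lt_of_lt_of_le heh0 ha1
  have hb0 : 0 < b := lt_of_lt_of_le heh0 hb1
  have hcA : 0 ≤ 1 + y - eh*b := by nlinarith [mul_nonneg (sub_nonneg.2 heh1) hb0.le]
  have hcB : 0 ≤ 1 + x - eh*a := by nlinarith [mul_nonneg (sub_nonneg.2 heh1) ha0.le]
  rcases le_or_gt ((3*eh - eh*eX^2)/2 - eh*x) eh with hA | hA <;>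
  rcases le_or_gt ((3*eh - eh*eY^2)/2 - eh*y) eh with hB | hB
  · -- both corners at eh
    nlinarith [mul_nonneg (sub_nonneg.2 ha1) hcA,
      mul_nonneg (sub_nonneg.2 hb1) (by nlinarith : (0:ℝ) ≤ 1 + x - eh^2),
      mul_nonneg (mul_nonneg hx0 hy0) heh0.le]
  · -- a at eh, b at H-bound (symmetric to case 2)
    have hys : y < (1 - eY^2)/2 := by nlinarith
    have hmb : eh * ((3*eh - eh*eY^2)/2 - eh*y) ≤ 1 + y := by nlinarith
    have slack1 : 0 ≤ (b - ((3*eh - eh*eY^2)/2 - eh*y)) * (1 + x - eh*a) :=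
      mul_nonneg (by linarith) hcB
    have slack2 : 0 ≤ (a - eh) * (1 + y - eh*((3*eh - eh*eY^2)/2 - eh*y)) :=
      mul_nonneg (by linarith) (by linarith)
    rcases le_or_gt (1 - eh^2) (2*x) with hc | hc
    · nlinarith [slack1, slack2, mul_nonneg (mul_nonneg heh0.le (by nlinarith : (0:ℝ) ≤ (1-eY^2)/2)) (by nlinarith : (0:ℝ) ≤ 1 + x - eh^2),
        mul_nonneg (mul_nonneg heh0.le hy0) (by linarith : (0:ℝ) ≤ eh^2 - 1 + 2*x)]
    · nlinarith [slack1, slack2, mul_nonneg (mul_nonneg heh0.le (by nlinarith : (0:ℝ) ≤ (1-eY^2)/2)) hx0,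
        mul_nonneg (mul_nonneg heh0.le (by linarith : (0:ℝ) ≤ (1-eY^2)/2 - y)) (by linarith : (0:ℝ) ≤ 1 - 2*x - eh^2)]
  · -- a at H-bound, b at eh
    have hxs : x < (1 - eX^2)/2 := by nlinarith
    have hma : eh * ((3*eh - eh*eX^2)/2 - eh*x) ≤ 1 + x := by nlinarith
    have slack1 : 0 ≤ (a - ((3*eh - eh*eX^2)/2 - eh*x)) * (1 + y - eh*b) :=
      mul_nonneg (by linarith) hcA
    have slack2 : 0 ≤ (b - eh) * (1 + x - eh*((3*eh - eh*eX^2)/2 - eh*x)) :=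
      mul_nonneg (by linarith) (by linarith)
    rcases le_or_gt (1 - eh^2) (2*y) with hc | hc
    · nlinarith [slack1, slack2, mul_nonneg (mul_nonneg heh0.le (by nlinarith : (0:ℝ) ≤ (1-eX^2)/2)) (by nlinarith : (0:ℝ) ≤ 1 + y - eh^2),
        mul_nonneg (mul_nonneg heh0.le hx0) (by linarith : (0:ℝ) ≤ eh^2 - 1 + 2*y)]
    · nlinarith [slack1, slack2, mul_nonneg (mul_nonneg heh0.le (by nlinarith : (0:ℝ) ≤ (1-eX^2)/2)) hy0,
        mul_nonneg (mul_nonneg heh0.le (by linarith : (0:ℝ) ≤ (1-eX^2)/2 - x)) (by linarith : (0:ℝ) ≤ 1 - 2*y - eh^2)]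
  · -- both at H-bound
    have hxs : x < (1 - eX^2)/2 := by nlinarith
    have hys : y < (1 - eY^2)/2 := by nlinarith
    have hsX : 0 < (1 - eX^2)/2 := lt_of_le_of_lt hx0 hxs
    have hsY : 0 < (1 - eY^2)/2 := lt_of_le_of_lt hy0 hys
    have hma : eh * ((3*eh - eh*eX^2)/2 - eh*x) ≤ 1 + x := by nlinarith
    have slack1 : 0 ≤ (a - ((3*eh - eh*eX^2)/2 - eh*x)) * (1 + y - eh*b) :=
      mul_nonneg (by linarith) hcA
    have slack2 : 0 ≤ (b - ((3*eh - eh*eY^2)/2 - eh*y)) * (1 + x - eh*((3*eh - eh*eX^2)/2 - eh*x)) :=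
      mul_nonneg (by linarith) (by linarith)
    have hX2 : eh^2 ≤ eX^2 := by nlinarith
    have hY2 : eh^2 ≤ eY^2 := by nlinarith
    -- bilinear remainder: R4/eh = c0 + c1 x + c2 y + c3 xy with
    -- AX = (3-eX^2)/2, AY = (3-eY^2)/2
    have key : 0 ≤ ((3-eX^2)/2 + (3-eY^2)/2 - 2 - eh^2*((3-eX^2)/2*((3-eY^2)/2) - 1))
        + ((3-eY^2)/2*(1+eh^2) - 2)*x + ((3-eX^2)/2*(1+eh^2) - 2)*y + (1-eh^2)*(x*y) := by
      apply bilin_nonneg ((1-eX^2)/2) ((1-eY^2)/2) x y _ _ _ _ hx0 hxs.le hy0 hys.le hsX hsY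
      · nlinarith [mul_nonneg hsX.le (by linarith : (0:ℝ) ≤ eY^2 - eh^2),
          mul_nonneg hsY.le (by nlinarith : (0:ℝ) ≤ 1 - eh^2),
          mul_nonneg (mul_nonneg hsX.le hsY.le) (by nlinarith : (0:ℝ) ≤ 2 - eh^2)]
      · nlinarith [mul_nonneg hsY.le (by nlinarith : (0:ℝ) ≤ (3-eX^2)/2 - eh^2)]
      · nlinarith [mul_nonneg hsX.le (by nlinarith : (0:ℝ) ≤ (3-eY^2)/2 - eh^2)]
      · nlinarith [mul_nonneg (mul_nonneg hsX.le hsY.le) heh0.le]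
    nlinarith [slack1, slack2, mul_nonneg heh0.le key]



/-- step lemma -/
lemma fitch_step (EX EY eX eY eh aX bX aY bY A B : ℝ)
    (hEX0 : 0 < EX) (hEX1 : EX ≤ 1) (hEY0 : 0 < EY) (hEY1 : EY ≤ 1)
    (heX0 : 0 < eX) (heX1 : eX ≤ 1) (heY0 : 0 < eY) (heY1 : eY ≤ 1)
    (hhX : eh = EX * eX) (hhY : eh = EY * eY)
    (haX0 : 0 ≤ aX) (hbX0 : 0 ≤ bX) (hsX : aX + bX ≤ 1) (hDX : eX ≤ aX - bX)
    (hHX : (3*eX - eX^3)/2 ≤ (aX - bX) + eX*(1 - aX - bX))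
    (haY0 : 0 ≤ aY) (hbY0 : 0 ≤ bY) (hsY : aY + bY ≤ 1) (hDY : eY ≤ aY - bY)
    (hHY : (3*eY - eY^3)/2 ≤ (aY - bY) + eY*(1 - aY - bY))
    (hA : A = ((1+EX)/2*aX + (1-(1+EX)/2)*bX) * ((1+EY)/2*aY + (1-(1+EY)/2)*bY)
        + ((1+EX)/2*aX + (1-(1+EX)/2)*bX) * (1-aY-bY)
        + (1-aX-bX) * ((1+EY)/2*aY + (1-(1+EY)/2)*bY))
    (hB : B = ((1-(1+EX)/2)*aX + (1+EX)/2*bX) * ((1-(1+EY)/2)*aY + (1+EY)/2*bY)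
        + ((1-(1+EX)/2)*aX + (1+EX)/2*bX) * (1-aY-bY)
        + (1-aX-bX) * ((1-(1+EY)/2)*aY + (1+EY)/2*bY)) :
    0 ≤ A ∧ 0 ≤ B ∧ A + B ≤ 1 ∧ eh ≤ A - B ∧
      (3*eh - eh^3)/2 ≤ (A - B) + eh*(1 - A - B) := by
  have hx0 : 0 ≤ 1 - aX - bX := by linarith
  have hy0 : 0 ≤ 1 - aY - bY := by linarith
  have hx1 : 1 - aX - bX ≤ 1 := by linarith
  have hy1 : 1 - aY - bY ≤ 1 := by linarith
  have hpX0 : 0 ≤ (1+EX)/2 := by linarith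
  have hqX0 : 0 ≤ 1-(1+EX)/2 := by linarith
  have hpY0 : 0 ≤ (1+EY)/2 := by linarith
  have hqY0 : 0 ≤ 1-(1+EY)/2 := by linarith
  have hA0 : 0 ≤ A := by
    rw [hA]
    have h1 : 0 ≤ (1+EX)/2*aX + (1-(1+EX)/2)*bX :=
      add_nonneg (mul_nonneg hpX0 haX0) (mul_nonneg hqX0 hbX0)
    have h2 : 0 ≤ (1+EY)/2*aY + (1-(1+EY)/2)*bY :=
      add_nonneg (mul_nonneg hpY0 haY0) (mul_nonneg hqY0 hbY0)
    exact add_nonneg (add_nonneg (mul_nonneg h1 h2) (mul_nonneg h1 hy0)) (mul_nonneg hx0 h2)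
  have hB0 : 0 ≤ B := by
    rw [hB]
    have h1 : 0 ≤ (1-(1+EX)/2)*aX + (1+EX)/2*bX :=
      add_nonneg (mul_nonneg hqX0 haX0) (mul_nonneg hpX0 hbX0)
    have h2 : 0 ≤ (1-(1+EY)/2)*aY + (1+EY)/2*bY :=
      add_nonneg (mul_nonneg hqY0 haY0) (mul_nonneg hpY0 hbY0)
    exact add_nonneg (add_nonneg (mul_nonneg h1 h2) (mul_nonneg h1 hy0)) (mul_nonneg hx0 h2)
  -- abbreviations
  have hDX0 : 0 ≤ aX - bX := le_trans heX0.le hDX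
  have hDY0 : 0 ≤ aY - bY := le_trans heY0.le hDY
  have ha1 : eh ≤ EX*(aX-bX) := by rw [hhX]; exact mul_le_mul_of_nonneg_left hDX hEX0.le
  have hb1 : eh ≤ EY*(aY-bY) := by rw [hhY]; exact mul_le_mul_of_nonneg_left hDY hEY0.le
  have ha2 : EX*(aX-bX) ≤ 1 - (1-aX-bX) := by nlinarith [mul_nonneg (sub_nonneg.2 hEX1) hDX0]
  have hb2 : EY*(aY-bY) ≤ 1 - (1-aY-bY) := by nlinarith [mul_nonneg (sub_nonneg.2 hEY1) hDY0]
  have hHa : (3*eh - eh*eX^2)/2 - eh*(1-aX-bX) ≤ EX*(aX-bX) := by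
    rw [hhX]; nlinarith [mul_le_mul_of_nonneg_left hHX hEX0.le]
  have hHb : (3*eh - eh*eY^2)/2 - eh*(1-aY-bY) ≤ EY*(aY-bY) := by
    rw [hhY]; nlinarith [mul_le_mul_of_nonneg_left hHY hEY0.le]
  have hD : A - B = (EX*(aX-bX)*(1+(1-aY-bY)) + EY*(aY-bY)*(1+(1-aX-bX)))/2 := by
    rw [hA, hB]; ring
  have hC : 1 - A - B = ((1-(1-aX-bX))*(1-(1-aY-bY)) + 2*((1-aX-bX)*(1-aY-bY))
      - (EX*(aX-bX))*(EY*(aY-bY)))/2 := by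
    rw [hA, hB]; ring
  have heh0 : 0 < eh := by rw [hhX]; positivity
  have hehX : eh ≤ eX := by rw [hhX]; nlinarith
  have hehY : eh ≤ eY := by rw [hhY]; nlinarith
  have hcore := core eh eX eY (1-aX-bX) (1-aY-bY) (EX*(aX-bX)) (EY*(aY-bY))
    heh0 hehX hehY heX1 heY1 hx0 hx1 hy0 hy1 ha1 ha2 hb1 hb2 hHa hHb
  refine ⟨hA0, hB0, ?_, ?_, ?_⟩
  · have hab : (EX*(aX-bX))*(EY*(aY-bY)) ≤ (1-(1-aX-bX))*(1-(1-aY-bY)) :=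
      mul_le_mul ha2 hb2 (le_trans heh0.le hb1) (by linarith)
    nlinarith [mul_nonneg hx0 hy0, hC]
  · nlinarith [hD, mul_nonneg (le_trans heh0.le ha1) hy0,
      mul_nonneg (le_trans heh0.le hb1) hx0]
  · have hC2 : eh*(1 - A - B) = eh*(((1-(1-aX-bX))*(1-(1-aY-bY)) + 2*((1-aX-bX)*(1-aY-bY))
        - (EX*(aX-bX))*(EY*(aY-bY)))/2) := by rw [hC]
    nlinarith [hcore, hD, hC2]



lemma fitch_invariant (lam : ℝ) (hlam : 0 ≤ lam) :
    ∀ (T : BLTree) (h : ℝ), nonnegLengths T → Depth T h →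
      0 ≤ h ∧ 0 ≤ (fitchAB lam T).1 ∧ 0 ≤ (fitchAB lam T).2 ∧
      (fitchAB lam T).1 + (fitchAB lam T).2 ≤ 1 ∧
      Real.exp (-2*lam*h) ≤ (fitchAB lam T).1 - (fitchAB lam T).2 ∧
      (3*Real.exp (-2*lam*h) - (Real.exp (-2*lam*h))^3)/2 ≤
        ((fitchAB lam T).1 - (fitchAB lam T).2)
          + Real.exp (-2*lam*h)*(1 - (fitchAB lam T).1 - (fitchAB lam T).2) := by
  intro T
  induction T with
  | leaf =>
    intro h _ hd
    have h0 : h = 0 := hd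
    subst h0
    norm_num [fitchAB, Real.exp_zero]
  | node tX tY X Y ihX ihY =>
    intro h hn hd
    obtain ⟨htX, htY, hnX, hnY⟩ := hn
    obtain ⟨hdX, hdY⟩ := hd
    obtain ⟨hhX0, haX0, hbX0, hsX, hDX, hHX⟩ := ihX (h - tX) hnX hdX
    obtain ⟨hhY0, haY0, hbY0, hsY, hDY, hHY⟩ := ihY (h - tY) hnY hdY
    have hh0 : 0 ≤ h := by linarith
    set EX := Real.exp (-2 * lam * tX) with hEXdef
    set EY := Real.exp (-2 * lam * tY) with hEYdef
    set eX := Real.exp (-2*lam*(h - tX)) with heXdef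
    set eY := Real.exp (-2*lam*(h - tY)) with heYdef
    set eh := Real.exp (-2*lam*h) with hehdef
    have hEX0 : 0 < EX := Real.exp_pos _
    have hEY0 : 0 < EY := Real.exp_pos _
    have hEX1 : EX ≤ 1 := by
      rw [hEXdef, ← Real.exp_zero]
      exact Real.exp_le_exp.mpr (by nlinarith)
    have hEY1 : EY ≤ 1 := by
      rw [hEYdef, ← Real.exp_zero]
      exact Real.exp_le_exp.mpr (by nlinarith)
    have heX0 : 0 < eX := Real.exp_pos _
    have heY0 : 0 < eY := Real.exp_pos _
    have heX1 : eX ≤ 1 := by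
      rw [heXdef, ← Real.exp_zero]
      exact Real.exp_le_exp.mpr (by nlinarith)
    have heY1 : eY ≤ 1 := by
      rw [heYdef, ← Real.exp_zero]
      exact Real.exp_le_exp.mpr (by nlinarith)
    have hhX : eh = EX * eX := by
      rw [hehdef, hEXdef, heXdef, ← Real.exp_add]; congr 1; ring
    have hhY : eh = EY * eY := by
      rw [hehdef, hEYdef, heYdef, ← Real.exp_add]; congr 1; ring
    have hA : (fitchAB lam (BLTree.node tX tY X Y)).1
        = ((1+EX)/2*(fitchAB lam X).1 + (1-(1+EX)/2)*(fitchAB lam X).2)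
            * ((1+EY)/2*(fitchAB lam Y).1 + (1-(1+EY)/2)*(fitchAB lam Y).2)
          + ((1+EX)/2*(fitchAB lam X).1 + (1-(1+EX)/2)*(fitchAB lam X).2)
            * (1-(fitchAB lam Y).1-(fitchAB lam Y).2)
          + (1-(fitchAB lam X).1-(fitchAB lam X).2)
            * ((1+EY)/2*(fitchAB lam Y).1 + (1-(1+EY)/2)*(fitchAB lam Y).2) := rfl
    have hB : (fitchAB lam (BLTree.node tX tY X Y)).2
        = ((1-(1+EX)/2)*(fitchAB lam X).1 + (1+EX)/2*(fitchAB lam X).2)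
            * ((1-(1+EY)/2)*(fitchAB lam Y).1 + (1+EY)/2*(fitchAB lam Y).2)
          + ((1-(1+EX)/2)*(fitchAB lam X).1 + (1+EX)/2*(fitchAB lam X).2)
            * (1-(fitchAB lam Y).1-(fitchAB lam Y).2)
          + (1-(fitchAB lam X).1-(fitchAB lam X).2)
            * ((1-(1+EY)/2)*(fitchAB lam Y).1 + (1+EY)/2*(fitchAB lam Y).2) := rfl
    obtain ⟨g1, g2, g3, g4, g5⟩ := fitch_step EX EY eX eY eh
      (fitchAB lam X).1 (fitchAB lam X).2 (fitchAB lam Y).1 (fitchAB lam Y).2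
      (fitchAB lam (BLTree.node tX tY X Y)).1 (fitchAB lam (BLTree.node tX tY X Y)).2
      hEX0 hEX1 hEY0 hEY1 heX0 heX1 heY0 heY1 hhX hhY
      haX0 hbX0 hsX hDX hHX haY0 hbY0 hsY hDY hHY hA hB
    exact ⟨hh0, g1, g2, g3, g4, g5⟩


/-- In an ultrametric tree T = node t_x t_y X Y of depth d with nonnegative
branch lengths, if the child X is an internal node of depth d - t_x, then
D(T) ≥ exp(-2λd)·(1 + (1/4)(1 - exp(-4λ(d - t_x)))). -/
theorem fitchD_ge_exp_internal_child (lam : ℝ) (hlam : 0 ≤ lam)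
    (tx ty tu tv : ℝ) (U V Y : BLTree)
    (hT : nonnegLengths (BLTree.node tx ty (BLTree.node tu tv U V) Y))
    (d : ℝ) (hd : Depth (BLTree.node tx ty (BLTree.node tu tv U V) Y) d) :
    fitchD lam (BLTree.node tx ty (BLTree.node tu tv U V) Y) ≥
      Real.exp (-2 * lam * d)
        * (1 + (1 / 4) * (1 - Real.exp (-4 * lam * (d - tx)))) := by
  obtain ⟨htx, hty, hnX, hnY⟩ := hT
  obtain ⟨hdX, hdY⟩ := hd
  set X := BLTree.node tu tv U V with hXdef
  obtain ⟨hhX0, haX0, hbX0, hsX, hDX, hHX⟩ := fitch_invariant lam hlam X (d - tx) hnX hdX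
  obtain ⟨hhY0, haY0, hbY0, hsY, hDY, hHY⟩ := fitch_invariant lam hlam Y (d - ty) hnY hdY
  set aX := (fitchAB lam X).1; set bX := (fitchAB lam X).2
  set aY := (fitchAB lam Y).1; set bY := (fitchAB lam Y).2
  set EX := Real.exp (-2 * lam * tx) with hEXdef
  set EY := Real.exp (-2 * lam * ty) with hEYdef
  set eX := Real.exp (-2 * lam * (d - tx)) with heXdef
  set eY := Real.exp (-2 * lam * (d - ty)) with heYdef
  set ed := Real.exp (-2 * lam * d) with heddef
  have hEX0 : 0 < EX := Real.exp_pos _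
  have hEY0 : 0 < EY := Real.exp_pos _
  have heX0 : 0 < eX := Real.exp_pos _
  have heY0 : 0 < eY := Real.exp_pos _
  have hed0 : 0 < ed := Real.exp_pos _
  have hhX : ed = EX * eX := by
    rw [heddef, hEXdef, heXdef, ← Real.exp_add]; congr 1; ring
  have hhY : ed = EY * eY := by
    rw [heddef, hEYdef, heYdef, ← Real.exp_add]; congr 1; ring
  have hexp4 : Real.exp (-4 * lam * (d - tx)) = eX * eX := by
    rw [heXdef, ← Real.exp_add]; congr 1; ring
  have hA : (fitchAB lam (BLTree.node tx ty X Y)).1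
      = ((1+EX)/2*aX + (1-(1+EX)/2)*bX) * ((1+EY)/2*aY + (1-(1+EY)/2)*bY)
        + ((1+EX)/2*aX + (1-(1+EX)/2)*bX) * (1-aY-bY)
        + (1-aX-bX) * ((1+EY)/2*aY + (1-(1+EY)/2)*bY) := rfl
  have hB : (fitchAB lam (BLTree.node tx ty X Y)).2
      = ((1-(1+EX)/2)*aX + (1+EX)/2*bX) * ((1-(1+EY)/2)*aY + (1+EY)/2*bY)
        + ((1-(1+EX)/2)*aX + (1+EX)/2*bX) * (1-aY-bY)
        + (1-aX-bX) * ((1-(1+EY)/2)*aY + (1+EY)/2*bY) := rfl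
  have hDX0 : 0 ≤ aX - bX := le_trans heX0.le hDX
  have hDY0 : 0 ≤ aY - bY := le_trans heY0.le hDY
  have hx0 : 0 ≤ 1 - aX - bX := by linarith
  have hy0 : 0 ≤ 1 - aY - bY := by linarith
  have hHa : (3*ed - ed*eX^2)/2 - ed*(1-aX-bX) ≤ EX*(aX-bX) := by
    rw [hhX]; nlinarith [mul_le_mul_of_nonneg_left hHX hEX0.le]
  have hb1 : ed ≤ EY*(aY-bY) := by rw [hhY]; exact mul_le_mul_of_nonneg_left hDY hEY0.le
  have hD : (fitchAB lam (BLTree.node tx ty X Y)).1 - (fitchAB lam (BLTree.node tx ty X Y)).2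
      = (EX*(aX-bX)*(1+(1-aY-bY)) + EY*(aY-bY)*(1+(1-aX-bX)))/2 := by
    rw [hA, hB]; ring
  rw [ge_iff_le, fitchD, hD, hexp4]
  nlinarith [hHa, hb1, mul_nonneg (mul_nonneg hEX0.le hDX0) hy0,
    mul_nonneg (sub_nonneg.2 hb1) hx0]
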